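/- For positive integers d, a, n with a ≤ d+1, the number of partitions with perimeter n (largest hook length n) into d-distinct parts each of size at least a equals the number of partitions with perimeter n into parts congruent to a modulo d+1. -/

import Mathlib

/-- A partition: a nonempty, nonincreasing list of positive integers. -/
def IsPartition (l : List ℕ) : Prop :=
  l ≠ [] ∧ l.Pairwise (· ≥ ·) ∧ ∀ x ∈ l, 0 < x

/-- Perimeter: (largest part) + (number of parts) - 1. -/
def perimeter (l : List ℕ) : ℕ := l.headI + l.length - 1

/-- d-distinct: consecutive parts differ by at least d. -/
def DDistinct (d : ℕ) (l : List ℕ) : Prop := l.Chain' (fun x y => y + d ≤ x)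

namespace PerimeterProof

/-- partitions counted on the left side -/
def S1 (d a n : ℕ) : Set (List ℕ) :=
  {l | IsPartition l ∧ perimeter l = n ∧ DDistinct d l ∧ ∀ x ∈ l, a ≤ x}

/-- partitions counted on the right side -/
def S2 (d a n : ℕ) : Set (List ℕ) :=
  {l | IsPartition l ∧ perimeter l = n ∧ ∀ x ∈ l, x % (d + 1) = a % (d + 1)}

lemma headI_mem {l : List ℕ} (h : l ≠ []) : l.headI ∈ l := by
  cases l with
  | nil => exact absurd rfl h
  | cons b t => simp

lemma le_headI {l : List ℕ} (hs : l.Pairwise (· ≥ ·)) {x : ℕ} (hx : x ∈ l) : x ≤ l.headI := by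
  cases l with
  | nil => simp at hx
  | cons b t =>
    rcases List.mem_cons.1 hx with rfl | hx
    · simp
    · exact (List.pairwise_cons.1 hs).1 x hx

lemma getLast_le {l : List ℕ} (hs : l.Pairwise (· ≥ ·)) (h : l ≠ []) {x : ℕ} (hx : x ∈ l) :
    l.getLast h ≤ x := by
  have hp : l.Pairwise (· ≥ ·) := hs
  rw [← List.dropLast_concat_getLast h] at hp hx
  rw [List.pairwise_append] at hp
  rcases List.mem_append.1 hx with hx | hx
  · exact hp.2.2 x hx _ (List.mem_singleton_self _)
  · simp only [List.mem_singleton] at hx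
    omega

lemma resid_ge {d a : ℕ} (ha : 0 < a) (had : a ≤ d + 1) {x : ℕ} (hx : 0 < x)
    (hr : x % (d + 1) = a % (d + 1)) : a ≤ x := by
  rcases Nat.lt_or_ge a (d + 1) with h | h
  · have h1 : a % (d + 1) = a := Nat.mod_eq_of_lt h
    have h2 : x % (d + 1) ≤ x := Nat.mod_le _ _
    omega
  · have h1 : a = d + 1 := le_antisymm had h
    subst h1
    rw [Nat.mod_self] at hr
    exact Nat.le_of_dvd hx (Nat.dvd_of_mod_eq_zero hr)

lemma resid_gt {d a : ℕ} (ha : 0 < a) (had : a ≤ d + 1) {x : ℕ} (hx : 0 < x)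
    (hr : x % (d + 1) = a % (d + 1)) (hax : a < x) : a + (d + 1) ≤ x := by
  have h1 : a ≡ x [MOD d + 1] := hr.symm
  have h2 : (d + 1) ∣ (x - a) := (Nat.modEq_iff_dvd' (le_of_lt hax)).1 h1
  have h3 : d + 1 ≤ x - a := Nat.le_of_dvd (by omega) h2
  omega

/-- finiteness of bounded lists of naturals -/
lemma finite_bdd (n : ℕ) : {l : List ℕ | l.length ≤ n ∧ ∀ x ∈ l, x < n + 1}.Finite := by
  have h1 : {L : List (Fin (n + 1)) | L.length ≤ n}.Finite := List.finite_length_le _ n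
  apply Set.Finite.subset (h1.image (List.map (Fin.val)))
  rintro l ⟨hl, hb⟩
  refine ⟨l.attach.map (fun x => (⟨x.1, hb x.1 x.2⟩ : Fin (n + 1))), by simpa using hl, ?_⟩
  rw [List.map_map]
  simp

lemma S1_finite (d a n : ℕ) : (S1 d a n).Finite := by
  apply Set.Finite.subset (finite_bdd n)
  rintro l ⟨⟨hne, hs, hpos⟩, hper, -, -⟩
  have h1 : 0 < l.headI := hpos _ (headI_mem hne)
  have h2 : 0 < l.length := List.length_pos_iff.2 hne
  have hper' : l.headI + l.length - 1 = n := hper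
  constructor
  · omega
  · intro x hx
    have := le_headI hs hx
    omega

lemma S2_finite (d a n : ℕ) : (S2 d a n).Finite := by
  apply Set.Finite.subset (finite_bdd n)
  rintro l ⟨⟨hne, hs, hpos⟩, hper, -⟩
  have h1 : 0 < l.headI := hpos _ (headI_mem hne)
  have h2 : 0 < l.length := List.length_pos_iff.2 hne
  have hper' : l.headI + l.length - 1 = n := hper
  constructor
  · omega
  · intro x hx
    have := le_headI hs hx
    omega

lemma S1_empty {d a n : ℕ} (h : n < a) : S1 d a n = ∅ := by
  ext l
  simp only [Set.mem_empty_iff_false, iff_false]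
  rintro ⟨⟨hne, hs, hpos⟩, hper, -, hge⟩
  have h1 : a ≤ l.headI := hge _ (headI_mem hne)
  have h2 : 0 < l.length := List.length_pos_iff.2 hne
  have hper' : l.headI + l.length - 1 = n := hper
  omega

lemma S2_empty {d a n : ℕ} (ha : 0 < a) (had : a ≤ d + 1) (h : n < a) : S2 d a n = ∅ := by
  ext l
  simp only [Set.mem_empty_iff_false, iff_false]
  rintro ⟨⟨hne, hs, hpos⟩, hper, hr⟩
  have h1 : a ≤ l.headI :=
    resid_ge ha had (hpos _ (headI_mem hne)) (hr _ (headI_mem hne))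
  have h2 : 0 < l.length := List.length_pos_iff.2 hne
  have hper' : l.headI + l.length - 1 = n := hper
  omega

lemma eq_singleton_aux {l : List ℕ} {a : ℕ} (hne : l ≠ []) (hper : perimeter l = a)
    (hge : ∀ x ∈ l, a ≤ x) : l = [a] := by
  have h1 : a ≤ l.headI := hge _ (headI_mem hne)
  have h2 : 0 < l.length := List.length_pos_iff.2 hne
  have hper' : l.headI + l.length - 1 = a := hper
  have h3 : l.length = 1 := by omega
  obtain ⟨x, rfl⟩ := List.length_eq_one_iff.1 h3
  simp only [List.headI_cons, List.length_cons, List.length_nil] at hper'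
  have : x = a := by omega
  subst this; rfl

lemma S1_singleton {d a : ℕ} (ha : 0 < a) : S1 d a a = {[a]} := by
  ext l
  simp only [Set.mem_singleton_iff]
  constructor
  · rintro ⟨⟨hne, hs, hpos⟩, hper, -, hge⟩
    exact eq_singleton_aux hne hper hge
  · rintro rfl
    refine ⟨⟨by simp, by simp, by simpa using ha⟩, ?_, by simp [DDistinct, List.Chain'], by simp⟩
    simp [perimeter]

lemma S2_singleton {d a : ℕ} (ha : 0 < a) (had : a ≤ d + 1) : S2 d a a = {[a]} := by
  ext l
  simp only [Set.mem_singleton_iff]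
  constructor
  · rintro ⟨⟨hne, hs, hpos⟩, hper, hr⟩
    exact eq_singleton_aux hne hper (fun x hx => resid_ge ha had (hpos x hx) (hr x hx))
  · rintro rfl
    exact ⟨⟨by simp, by simp, by simpa using ha⟩, by simp [perimeter], by simp⟩

lemma sorted_map_sub (c : ℕ) {l : List ℕ} (hs : l.Pairwise (· ≥ ·)) :
    (l.map (· - c)).Pairwise (· ≥ ·) :=
  List.Pairwise.map _ (fun _ _ h => Nat.sub_le_sub_right h c) hs

lemma sorted_map_add (c : ℕ) {l : List ℕ} (hs : l.Pairwise (· ≥ ·)) :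
    (l.map (· + c)).Pairwise (· ≥ ·) :=
  List.Pairwise.map _ (fun _ _ h => Nat.add_le_add_right h c) hs

lemma chain'_map_sub {d c : ℕ} : ∀ {l : List ℕ}, (∀ x ∈ l, c ≤ x) →
    l.Chain' (fun x y => y + d ≤ x) → (l.map (· - c)).Chain' (fun x y => y + d ≤ x)
  | [], _, _ => by simp [List.Chain']
  | [x], _, _ => by simp [List.Chain']
  | x :: y :: t, hm, hc => by
    simp only [List.Chain', List.isChain_cons_cons] at hc
    rw [List.map_cons, List.map_cons]; simp only [List.Chain', List.isChain_cons_cons]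
    refine ⟨?_, ?_⟩
    · have hx := hm x (by simp)
      have hy := hm y (by simp)
      omega
    · exact chain'_map_sub (fun z hz => hm z (List.mem_cons_of_mem _ hz)) hc.2

lemma chain'_map_add {d : ℕ} (c : ℕ) {l : List ℕ} (hc : l.Chain' (fun x y => y + d ≤ x)) :
    (l.map (· + c)).Chain' (fun x y => y + d ≤ x) := by
  simp only [List.Chain', List.isChain_map]
  exact List.IsChain.imp (fun a b h => by omega) hc

lemma headI_map (f : ℕ → ℕ) {l : List ℕ} (h : l ≠ []) : (l.map f).headI = f l.headI := by
  cases l with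
  | nil => exact absurd rfl h
  | cons b t => simp

lemma headI_dropLast {l : List ℕ} (h : 2 ≤ l.length) : l.dropLast.headI = l.headI := by
  match l with
  | [] => simp at h
  | [x] => simp at h
  | x :: y :: t => simp

lemma headI_append {l : List ℕ} (h : l ≠ []) (t : List ℕ) : (l ++ t).headI = l.headI := by
  cases l with
  | nil => exact absurd rfl h
  | cons b s => simp

lemma map_sub_add (c : ℕ) {l : List ℕ} (h : ∀ x ∈ l, c ≤ x) :
    (l.map (· - c)).map (· + c) = l := by
  rw [List.map_map]
  have : ∀ x ∈ l, (((· + c) ∘ (· - c)) x) = id x := by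
    intro x hx
    have := h x hx
    simp only [Function.comp_apply, id_eq]
    omega
  rw [List.map_congr_left this, List.map_id]

lemma map_add_sub (c : ℕ) (l : List ℕ) : (l.map (· + c)).map (· - c) = l := by
  rw [List.map_map]
  have : ∀ x ∈ l, (((· - c) ∘ (· + c)) x) = id x := by
    intro x _
    simp only [Function.comp_apply, id_eq]
    omega
  rw [List.map_congr_left this, List.map_id]

lemma map_ne_nil {f : ℕ → ℕ} {l : List ℕ} (h : l ≠ []) : l.map f ≠ [] := by
  cases l with
  | nil => exact absurd rfl h
  | cons b t => simp

lemma ncard_of_bijOn {f : List ℕ → List ℕ} {s t : Set (List ℕ)} (h : Set.BijOn f s t) :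
    s.ncard = t.ncard := by
  rw [← h.image_eq, Set.ncard_image_of_injOn h.injOn]

instance (d : ℕ) : IsTrans ℕ (fun x y : ℕ => y + d ≤ x) := ⟨fun _ _ _ h1 h2 => by omega⟩

/-! ### The four bijections -/

lemma bijA1 {d a n : ℕ} (hd : 0 < d) (ha : 0 < a) :
    Set.BijOn (fun l => l.map (· - 1)) {l ∈ S1 d a n | ∀ x ∈ l, a + 1 ≤ x}
      (S1 d a (n - 1)) := by
  have hmem : ∀ l ∈ {l ∈ S1 d a n | ∀ x ∈ l, a + 1 ≤ x}, l.map (· - 1) ∈ S1 d a (n - 1) := by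
    rintro l ⟨⟨⟨hne, hs, hpos⟩, hper, hdd, hge⟩, hP⟩
    have hh : a + 1 ≤ l.headI := hP _ (headI_mem hne)
    have hlen : 0 < l.length := List.length_pos_iff.2 hne
    have hper' : l.headI + l.length - 1 = n := hper
    refine ⟨⟨by simpa using hne, sorted_map_sub 1 hs, ?_⟩, ?_, ?_, ?_⟩
    · intro x hx
      obtain ⟨y, hy, rfl⟩ := List.mem_map.1 hx
      have := hP y hy
      omega
    · show (l.map (· - 1)).headI + (l.map (· - 1)).length - 1 = n - 1
      rw [headI_map _ hne, List.length_map]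
      omega
    · exact chain'_map_sub (fun x hx => by have := hP x hx; omega) hdd
    · intro x hx
      obtain ⟨y, hy, rfl⟩ := List.mem_map.1 hx
      have := hP y hy
      omega
  have hkey : ∀ l ∈ {l ∈ S1 d a n | ∀ x ∈ l, a + 1 ≤ x}, (l.map (· - 1)).map (· + 1) = l := by
    rintro l ⟨-, hP⟩
    exact map_sub_add 1 (fun x hx => by have := hP x hx; omega)
  refine ⟨hmem, ?_, ?_⟩
  · intro x hx y hy hxy
    have := hkey x hx
    have := hkey y hy
    simp only at hxy
    rw [← hkey x hx, ← hkey y hy, hxy]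
  · rintro l' ⟨⟨hne, hs, hpos⟩, hper, hdd, hge⟩
    have hh : a ≤ l'.headI := hge _ (headI_mem hne)
    have hlen : 0 < l'.length := List.length_pos_iff.2 hne
    have hper' : l'.headI + l'.length - 1 = n - 1 := hper
    refine ⟨l'.map (· + 1), ⟨⟨⟨by simpa using hne, sorted_map_add 1 hs, ?_⟩, ?_, ?_, ?_⟩, ?_⟩, ?_⟩
    · intro x hx
      obtain ⟨y, hy, rfl⟩ := List.mem_map.1 hx
      omega
    · show (l'.map (· + 1)).headI + (l'.map (· + 1)).length - 1 = n
      rw [headI_map _ hne, List.length_map]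
      omega
    · exact chain'_map_add 1 hdd
    · intro x hx
      obtain ⟨y, hy, rfl⟩ := List.mem_map.1 hx
      have := hge y hy
      omega
    · intro x hx
      obtain ⟨y, hy, rfl⟩ := List.mem_map.1 hx
      have := hge y hy
      omega
    · exact map_add_sub 1 l'

lemma bijA2 {d a n : ℕ} (hd : 0 < d) (ha : 0 < a) (hn : a < n) :
    Set.BijOn (fun l => (l.dropLast).map (· - d)) {l ∈ S1 d a n | ¬ ∀ x ∈ l, a + 1 ≤ x}
      (S1 d a (n - (d + 1))) := by
  -- facts about members of the source
  have facts : ∀ l ∈ {l ∈ S1 d a n | ¬ ∀ x ∈ l, a + 1 ≤ x},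
      ∃ hne : l ≠ [], 2 ≤ l.length ∧ l.getLast hne = a ∧ (∀ x ∈ l.dropLast, a + d ≤ x) ∧
        l.dropLast ≠ [] ∧ l.headI ∈ l.dropLast ∧ l.dropLast.headI = l.headI := by
    rintro l ⟨⟨⟨hne, hs, hpos⟩, hper, hdd, hge⟩, hP⟩
    push_neg at hP
    obtain ⟨w, hw, hwa⟩ := hP
    have hwa' : w = a := le_antisymm (by omega) (hge w hw)
    subst hwa'
    have hper' : l.headI + l.length - 1 = n := hper
    have hlen : 0 < l.length := List.length_pos_iff.2 hne
    have hk2 : 2 ≤ l.length := by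
      by_contra hcon
      have h1 : l.length = 1 := by omega
      obtain ⟨x, rfl⟩ := List.length_eq_one_iff.1 h1
      simp only [List.mem_singleton] at hw
      subst hw
      simp only [List.headI_cons, List.length_cons, List.length_nil] at hper'
      omega
    have hlast : l.getLast hne = w :=
      le_antisymm (getLast_le hs hne hw) (hge _ (List.getLast_mem hne))
    have hpw : l.Pairwise (fun x y => y + d ≤ x) := List.isChain_iff_pairwise.mp hdd
    have hdrop : ∀ x ∈ l.dropLast, w + d ≤ x := by
      intro x hx
      have hsp := hpw
      conv at hsp => rw [← List.dropLast_concat_getLast hne]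
      rw [List.pairwise_append] at hsp
      have := hsp.2.2 x hx (l.getLast hne) (List.mem_singleton_self _)
      omega
    have hdne : l.dropLast ≠ [] := by
      have := List.length_dropLast (xs := l)
      intro hcon
      rw [hcon] at this
      simp at this
      omega
    have hhd : l.dropLast.headI = l.headI := headI_dropLast hk2
    exact ⟨hne, hk2, hlast, hdrop, hdne, hhd ▸ headI_mem hdne, hhd⟩
  have hmem : ∀ l ∈ {l ∈ S1 d a n | ¬ ∀ x ∈ l, a + 1 ≤ x},
      (l.dropLast).map (· - d) ∈ S1 d a (n - (d + 1)) := by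
    intro l hl
    obtain ⟨hne, hk2, hlast, hdrop, hdne, hhm, hhd⟩ := facts l hl
    obtain ⟨⟨⟨-, hs, hpos⟩, hper, hdd, hge⟩, -⟩ := hl
    have hper' : l.headI + l.length - 1 = n := hper
    have hh : a + d ≤ l.headI := hdrop _ hhm
    refine ⟨⟨map_ne_nil hdne, sorted_map_sub d (hs.sublist (List.dropLast_sublist l)), ?_⟩,
      ?_, ?_, ?_⟩
    · intro x hx
      obtain ⟨y, hy, rfl⟩ := List.mem_map.1 hx
      have := hdrop y hy
      omega
    · show (_ : List ℕ).headI + (_ : List ℕ).length - 1 = n - (d + 1)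
      rw [headI_map _ hdne, List.length_map, hhd, List.length_dropLast]
      omega
    · refine chain'_map_sub (fun x hx => by have := hdrop x hx; omega) ?_
      have hpw : l.Pairwise (fun x y => y + d ≤ x) := List.isChain_iff_pairwise.mp hdd
      exact (hpw.sublist (List.dropLast_sublist l)).isChain
    · intro x hx
      obtain ⟨y, hy, rfl⟩ := List.mem_map.1 hx
      have := hdrop y hy
      omega
  have hkey : ∀ l ∈ {l ∈ S1 d a n | ¬ ∀ x ∈ l, a + 1 ≤ x},
      ((l.dropLast.map (· - d)).map (· + d)) ++ [a] = l := by
    intro l hl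
    obtain ⟨hne, hk2, hlast, hdrop, hdne, hhm, hhd⟩ := facts l hl
    rw [map_sub_add d (fun x hx => by have := hdrop x hx; omega)]
    conv_rhs => rw [← List.dropLast_concat_getLast hne]
    rw [hlast]
  refine ⟨hmem, ?_, ?_⟩
  · intro x hx y hy hxy
    simp only at hxy
    rw [← hkey x hx, ← hkey y hy, hxy]
  · rintro l' ⟨⟨hne, hs, hpos⟩, hper, hdd, hge⟩
    have hh : a ≤ l'.headI := hge _ (headI_mem hne)
    have hlen : 0 < l'.length := List.length_pos_iff.2 hne
    have hper' : l'.headI + l'.length - 1 = n - (d + 1) := hper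
    refine ⟨(l'.map (· + d)) ++ [a], ⟨⟨⟨by simp, ?_, ?_⟩, ?_, ?_, ?_⟩, ?_⟩, ?_⟩
    · -- sorted
      rw [List.pairwise_append]
      refine ⟨sorted_map_add d hs, List.pairwise_singleton _ _, ?_⟩
      intro x hx y hy
      obtain ⟨z, hz, rfl⟩ := List.mem_map.1 hx
      simp only [List.mem_singleton] at hy
      have := hge z hz
      omega
    · -- positive
      intro x hx
      rcases List.mem_append.1 hx with hx | hx
      · obtain ⟨z, hz, rfl⟩ := List.mem_map.1 hx
        have := hpos z hz
        omega
      · simp only [List.mem_singleton] at hx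
        omega
    · -- perimeter
      show (_ : List ℕ).headI + (_ : List ℕ).length - 1 = n
      rw [headI_append (by simpa using hne), headI_map _ hne, List.length_append,
        List.length_map]
      simp only [List.length_cons, List.length_nil]
      omega
    · -- DDistinct
      rw [DDistinct]; simp only [List.Chain', List.isChain_append]
      refine ⟨chain'_map_add d hdd, by simp, ?_⟩
      intro x hx y hy
      simp only [List.head?_cons, Option.mem_some_iff] at hy
      subst hy
      have hx' : x ∈ l'.map (· + d) := List.mem_of_mem_getLast? hx
      obtain ⟨z, hz, rfl⟩ := List.mem_map.1 hx'
      have := hge z hz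
      omega
    · -- all ≥ a
      intro x hx
      rcases List.mem_append.1 hx with hx | hx
      · obtain ⟨z, hz, rfl⟩ := List.mem_map.1 hx
        have := hge z hz
        omega
      · simp only [List.mem_singleton] at hx
        omega
    · -- ¬ all > a
      push_neg
      exact ⟨a, by simp, by omega⟩
    · -- f (g l') = l'
      simp only
      rw [List.dropLast_concat, map_add_sub d l']

lemma bijB1 {d a n : ℕ} (ha : 0 < a) (had : a ≤ d + 1) :
    Set.BijOn (fun l => l.map (· - (d + 1))) {l ∈ S2 d a n | ∀ x ∈ l, a + 1 ≤ x}
      (S2 d a (n - (d + 1))) := by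
  have facts : ∀ l ∈ {l ∈ S2 d a n | ∀ x ∈ l, a + 1 ≤ x}, ∀ x ∈ l, a + (d + 1) ≤ x := by
    rintro l ⟨⟨⟨hne, hs, hpos⟩, hper, hr⟩, hP⟩ x hx
    exact resid_gt ha had (hpos x hx) (hr x hx) (by have := hP x hx; omega)
  have hmem : ∀ l ∈ {l ∈ S2 d a n | ∀ x ∈ l, a + 1 ≤ x},
      l.map (· - (d + 1)) ∈ S2 d a (n - (d + 1)) := by
    intro l hl
    have hbig := facts l hl
    obtain ⟨⟨⟨hne, hs, hpos⟩, hper, hr⟩, hP⟩ := hl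
    have hper' : l.headI + l.length - 1 = n := hper
    have hh : a + (d + 1) ≤ l.headI := hbig _ (headI_mem hne)
    have hlen : 0 < l.length := List.length_pos_iff.2 hne
    refine ⟨⟨by simpa using hne, sorted_map_sub (d + 1) hs, ?_⟩, ?_, ?_⟩
    · intro x hx
      obtain ⟨y, hy, rfl⟩ := List.mem_map.1 hx
      have := hbig y hy
      omega
    · show (_ : List ℕ).headI + (_ : List ℕ).length - 1 = n - (d + 1)
      rw [headI_map _ hne, List.length_map]
      omega
    · intro x hx
      obtain ⟨y, hy, rfl⟩ := List.mem_map.1 hx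
      have hy' := hbig y hy
      have heq : y - (d + 1) + (d + 1) = y := by omega
      calc (y - (d + 1)) % (d + 1) = (y - (d + 1) + (d + 1)) % (d + 1) :=
            (Nat.add_mod_right _ _).symm
        _ = y % (d + 1) := by rw [heq]
        _ = a % (d + 1) := hr y hy
  have hkey : ∀ l ∈ {l ∈ S2 d a n | ∀ x ∈ l, a + 1 ≤ x},
      (l.map (· - (d + 1))).map (· + (d + 1)) = l := by
    intro l hl
    exact map_sub_add (d + 1) (fun x hx => by have := facts l hl x hx; omega)
  refine ⟨hmem, ?_, ?_⟩
  · intro x hx y hy hxy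
    simp only at hxy
    rw [← hkey x hx, ← hkey y hy, hxy]
  · rintro l' ⟨⟨hne, hs, hpos⟩, hper, hr⟩
    have hge : ∀ x ∈ l', a ≤ x := fun x hx => resid_ge ha had (hpos x hx) (hr x hx)
    have hh : a ≤ l'.headI := hge _ (headI_mem hne)
    have hlen : 0 < l'.length := List.length_pos_iff.2 hne
    have hper' : l'.headI + l'.length - 1 = n - (d + 1) := hper
    refine ⟨l'.map (· + (d + 1)), ⟨⟨⟨by simpa using hne, sorted_map_add (d + 1) hs, ?_⟩,
      ?_, ?_⟩, ?_⟩, ?_⟩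
    · intro x hx
      obtain ⟨y, hy, rfl⟩ := List.mem_map.1 hx
      omega
    · show (_ : List ℕ).headI + (_ : List ℕ).length - 1 = n
      rw [headI_map _ hne, List.length_map]
      omega
    · intro x hx
      obtain ⟨y, hy, rfl⟩ := List.mem_map.1 hx
      rw [Nat.add_mod_right]
      exact hr y hy
    · intro x hx
      obtain ⟨y, hy, rfl⟩ := List.mem_map.1 hx
      have := hge y hy
      omega
    · exact map_add_sub (d + 1) l'

lemma bijB2 {d a n : ℕ} (ha : 0 < a) (had : a ≤ d + 1) (hn : a < n) :
    Set.BijOn (fun l => l.dropLast) {l ∈ S2 d a n | ¬ ∀ x ∈ l, a + 1 ≤ x}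
      (S2 d a (n - 1)) := by
  have facts : ∀ l ∈ {l ∈ S2 d a n | ¬ ∀ x ∈ l, a + 1 ≤ x},
      ∃ hne : l ≠ [], 2 ≤ l.length ∧ l.getLast hne = a ∧ l.dropLast ≠ [] ∧
        l.dropLast.headI = l.headI := by
    rintro l ⟨⟨⟨hne, hs, hpos⟩, hper, hr⟩, hP⟩
    have hge : ∀ x ∈ l, a ≤ x := fun x hx => resid_ge ha had (hpos x hx) (hr x hx)
    push_neg at hP
    obtain ⟨w, hw, hwa⟩ := hP
    have hwa' : w = a := le_antisymm (by omega) (hge w hw)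
    subst hwa'
    have hper' : l.headI + l.length - 1 = n := hper
    have hlen : 0 < l.length := List.length_pos_iff.2 hne
    have hk2 : 2 ≤ l.length := by
      by_contra hcon
      have h1 : l.length = 1 := by omega
      obtain ⟨x, rfl⟩ := List.length_eq_one_iff.1 h1
      simp only [List.mem_singleton] at hw
      subst hw
      simp only [List.headI_cons, List.length_cons, List.length_nil] at hper'
      omega
    have hlast : l.getLast hne = w :=
      le_antisymm (getLast_le hs hne hw) (hge _ (List.getLast_mem hne))
    have hdne : l.dropLast ≠ [] := by
      have := List.length_dropLast (xs := l)
      intro hcon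
      rw [hcon] at this
      simp at this
      omega
    exact ⟨hne, hk2, hlast, hdne, headI_dropLast hk2⟩
  have hmem : ∀ l ∈ {l ∈ S2 d a n | ¬ ∀ x ∈ l, a + 1 ≤ x}, l.dropLast ∈ S2 d a (n - 1) := by
    intro l hl
    obtain ⟨hne, hk2, hlast, hdne, hhd⟩ := facts l hl
    obtain ⟨⟨⟨-, hs, hpos⟩, hper, hr⟩, -⟩ := hl
    have hper' : l.headI + l.length - 1 = n := hper
    have hh : 0 < l.headI := hpos _ (headI_mem hne)
    refine ⟨⟨hdne, hs.sublist (List.dropLast_sublist l), ?_⟩, ?_, ?_⟩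
    · exact fun x hx => hpos x ((List.dropLast_sublist l).subset hx)
    · show (_ : List ℕ).headI + (_ : List ℕ).length - 1 = n - 1
      rw [hhd, List.length_dropLast]
      omega
    · exact fun x hx => hr x ((List.dropLast_sublist l).subset hx)
  have hkey : ∀ l ∈ {l ∈ S2 d a n | ¬ ∀ x ∈ l, a + 1 ≤ x}, l.dropLast ++ [a] = l := by
    intro l hl
    obtain ⟨hne, hk2, hlast, hdne, hhd⟩ := facts l hl
    conv_rhs => rw [← List.dropLast_concat_getLast hne]
    rw [hlast]
  refine ⟨hmem, ?_, ?_⟩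
  · intro x hx y hy hxy
    simp only at hxy
    rw [← hkey x hx, ← hkey y hy, hxy]
  · rintro l' ⟨⟨hne, hs, hpos⟩, hper, hr⟩
    have hge : ∀ x ∈ l', a ≤ x := fun x hx => resid_ge ha had (hpos x hx) (hr x hx)
    have hh : a ≤ l'.headI := hge _ (headI_mem hne)
    have hlen : 0 < l'.length := List.length_pos_iff.2 hne
    have hper' : l'.headI + l'.length - 1 = n - 1 := hper
    refine ⟨l' ++ [a], ⟨⟨⟨by simp, ?_, ?_⟩, ?_, ?_⟩, ?_⟩, ?_⟩
    · rw [List.pairwise_append]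
      refine ⟨hs, List.pairwise_singleton _ _, ?_⟩
      intro x hx y hy
      simp only [List.mem_singleton] at hy
      have := hge x hx
      omega
    · intro x hx
      rcases List.mem_append.1 hx with hx | hx
      · exact hpos x hx
      · simp only [List.mem_singleton] at hx
        omega
    · show (_ : List ℕ).headI + (_ : List ℕ).length - 1 = n
      rw [headI_append hne, List.length_append]
      simp only [List.length_cons, List.length_nil]
      omega
    · intro x hx
      rcases List.mem_append.1 hx with hx | hx
      · exact hr x hx
      · simp only [List.mem_singleton] at hx
        subst hx; rfl
    · push_neg
      exact ⟨a, by simp, by omega⟩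
    · simp only
      rw [List.dropLast_concat]

lemma main (d a : ℕ) (hd : 0 < d) (ha : 0 < a) (had : a ≤ d + 1) :
    ∀ n, (S1 d a n).ncard = (S2 d a n).ncard := by
  intro n
  induction n using Nat.strong_induction_on with
  | _ n ih =>
    rcases lt_trichotomy n a with h | h | h
    · rw [S1_empty h, S2_empty ha had h]
    · subst h
      rw [S1_singleton ha, S2_singleton ha had]
    · have e1 : S1 d a n = {l ∈ S1 d a n | ∀ x ∈ l, a + 1 ≤ x} ∪
          {l ∈ S1 d a n | ¬ ∀ x ∈ l, a + 1 ≤ x} := by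
        ext l
        simp only [Set.mem_union, Set.mem_setOf_eq, Set.mem_sep_iff]
        tauto
      have e2 : S2 d a n = {l ∈ S2 d a n | ∀ x ∈ l, a + 1 ≤ x} ∪
          {l ∈ S2 d a n | ¬ ∀ x ∈ l, a + 1 ≤ x} := by
        ext l
        simp only [Set.mem_union, Set.mem_setOf_eq, Set.mem_sep_iff]
        tauto
      have disj1 : Disjoint {l ∈ S1 d a n | ∀ x ∈ l, a + 1 ≤ x}
          {l ∈ S1 d a n | ¬ ∀ x ∈ l, a + 1 ≤ x} := by
        rw [Set.disjoint_left]
        rintro l ⟨-, hP⟩ ⟨-, hnP⟩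
        exact hnP hP
      have disj2 : Disjoint {l ∈ S2 d a n | ∀ x ∈ l, a + 1 ≤ x}
          {l ∈ S2 d a n | ¬ ∀ x ∈ l, a + 1 ≤ x} := by
        rw [Set.disjoint_left]
        rintro l ⟨-, hP⟩ ⟨-, hnP⟩
        exact hnP hP
      rw [e1, Set.ncard_union_eq disj1 ((S1_finite d a n).subset (Set.sep_subset _ _))
          ((S1_finite d a n).subset (Set.sep_subset _ _)),
        e2, Set.ncard_union_eq disj2 ((S2_finite d a n).subset (Set.sep_subset _ _))
          ((S2_finite d a n).subset (Set.sep_subset _ _)),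
        ncard_of_bijOn (bijA1 hd ha), ncard_of_bijOn (bijA2 hd ha h),
        ncard_of_bijOn (bijB1 ha had), ncard_of_bijOn (bijB2 ha had h),
        ih (n - 1) (by omega), ih (n - (d + 1)) (by omega)]
      omega

end PerimeterProof

theorem stmt0 (d a n : ℕ) (hd : 0 < d) (ha : 0 < a) (hn : 0 < n) (had : a ≤ d + 1) :
    Nat.card {l : List ℕ // IsPartition l ∧ perimeter l = n ∧ DDistinct d l ∧ ∀ x ∈ l, a ≤ x}
      = Nat.card {l : List ℕ // IsPartition l ∧ perimeter l = n ∧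
          ∀ x ∈ l, x % (d + 1) = a % (d + 1)} := by
  have h1 : Nat.card {l : List ℕ // IsPartition l ∧ perimeter l = n ∧ DDistinct d l ∧
      ∀ x ∈ l, a ≤ x} = (PerimeterProof.S1 d a n).ncard :=
    Nat.card_coe_set_eq (PerimeterProof.S1 d a n)
  have h2 : Nat.card {l : List ℕ // IsPartition l ∧ perimeter l = n ∧
      ∀ x ∈ l, x % (d + 1) = a % (d + 1)} = (PerimeterProof.S2 d a n).ncard :=
    Nat.card_coe_set_eq (PerimeterProof.S2 d a n)
  rw [h1, h2]
  exact PerimeterProof.main d a hd ha had n
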